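/- Let m, n ≥ 1 with m + n ≥ 3, and let e be any edge of the complete bipartite graph K_{m,n}. Then γst(K_{m,n} − e) = γst((K_{m,n})_e). -/
import Mathlib


open SimpleGraph

/-- The degree of a vertex, as the cardinality of its neighbor set. -/
noncomputable def sdeg {V : Type*} (G : SimpleGraph V) (v : V) : ℕ :=
  (G.neighborSet v).ncard

/-- `D` is a strong dominating set of `G` if every vertex outside `D` has a neighbor
in `D` of at least the same degree. -/
def IsStrongDominatingSet {V : Type*} (G : SimpleGraph V) (D : Set V) : Prop :=
  ∀ x ∉ D, ∃ y ∈ D, G.Adj x y ∧ sdeg G x ≤ sdeg G y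

/-- The strong domination number: minimum cardinality of a strong dominating set. -/
noncomputable def strongDominationNumber {V : Type*} (G : SimpleGraph V) : ℕ :=
  sInf {n | ∃ D : Set V, IsStrongDominatingSet G D ∧ D.ncard = n}

/-- Subdivision of the edge `uv` of `G`: delete `uv`, add a new vertex `none`
adjacent to `u` and `v`. -/
def subdivide {V : Type*} (G : SimpleGraph V) (u v : V) : SimpleGraph (Option V) :=
  SimpleGraph.fromRel (fun a b =>
    match a, b with
    | some x, some y => G.Adj x y ∧ ¬(s(x, y) = s(u, v))
    | some x, none => x = u ∨ x = v
    | none, some _ => False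
    | none, none => False)

/-- Contraction of the edge `uv` of `G`: the vertex `u` plays the role of the merged
vertex, and `v` is removed. -/
def contractEdge {V : Type*} (G : SimpleGraph V) (u v : V) :
    SimpleGraph {x : V // x ≠ v} :=
  SimpleGraph.fromRel (fun a b =>
    G.Adj a.1 b.1 ∨ (a.1 = u ∧ G.Adj v b.1) ∨ (b.1 = u ∧ G.Adj a.1 v))

/-- The corona product `G1 ∘ G2`: one copy of `G1` together with one copy of `G2`
for each vertex `i` of `G1`, where `i` is joined to all vertices of its copy. -/
def corona {V1 V2 : Type*} (G1 : SimpleGraph V1) (G2 : SimpleGraph V2) :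
    SimpleGraph (V1 ⊕ V1 × V2) :=
  SimpleGraph.fromRel (fun a b =>
    match a, b with
    | .inl a, .inl b => G1.Adj a b
    | .inl a, .inr (i, _) => a = i
    | .inr _, .inl _ => False
    | .inr (i, x), .inr (j, y) => i = j ∧ G2.Adj x y)

/-- The `k`-subdivision `G^{1/k}` of `G`: every edge is replaced by a path of length
`k`, the internal vertices of the path replacing `e` being indexed by `e` and a
position in `Fin (k-1)` (an orientation of `e` is chosen via `Quot.out`). -/
noncomputable def kSubdivision {V : Type*} (G : SimpleGraph V) (k : ℕ) :
    SimpleGraph (V ⊕ G.edgeSet × Fin (k - 1)) :=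
  SimpleGraph.fromRel (fun a b =>
    match a, b with
    | .inl x, .inl y => k ≤ 1 ∧ G.Adj x y
    | .inl x, .inr (e, i) =>
        (x = (Quot.out (e : Sym2 V)).1 ∧ (i : ℕ) = 0) ∨
        (x = (Quot.out (e : Sym2 V)).2 ∧ (i : ℕ) = k - 2)
    | .inr _, .inl _ => False
    | .inr (e, i), .inr (f, j) => e = f ∧ (j : ℕ) = (i : ℕ) + 1)


lemma sdn_eq {V : Type*} (G : SimpleGraph V) (k : ℕ) (D0 : Set V)
    (h0 : IsStrongDominatingSet G D0) (hc : D0.ncard = k)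
    (hlb : ∀ D, IsStrongDominatingSet G D → k ≤ D.ncard) :
    strongDominationNumber G = k := by
  have hne : {n | ∃ D : Set V, IsStrongDominatingSet G D ∧ D.ncard = n}.Nonempty :=
    ⟨k, D0, h0, hc⟩
  obtain ⟨D, hD, hDc⟩ := Nat.sInf_mem hne
  refine le_antisymm (Nat.sInf_le ⟨D0, h0, hc⟩) ?_
  calc k ≤ D.ncard := hlb D hD
    _ = _ := hDc

lemma subdivide_comm {V : Type*} (G : SimpleGraph V) (u v : V) :
    subdivide G u v = subdivide G v u := by
  ext a b
  cases a <;> cases b <;>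
    simp [subdivide, fromRel_adj, Sym2.eq_swap (a := u)] <;> tauto

def delG (m n : ℕ) (a0 : Fin m) (b0 : Fin n) : SimpleGraph (Fin m ⊕ Fin n) :=
  (completeBipartiteGraph (Fin m) (Fin n)).deleteEdges {s(Sum.inl a0, Sum.inr b0)}

def subG (m n : ℕ) (a0 : Fin m) (b0 : Fin n) : SimpleGraph (Option (Fin m ⊕ Fin n)) :=
  subdivide (completeBipartiteGraph (Fin m) (Fin n)) (Sum.inl a0) (Sum.inr b0)

variable {m n : ℕ} {a0 : Fin m} {b0 : Fin n}

@[simp] lemma delG_adj_inl_inr {a : Fin m} {b : Fin n} :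
    (delG m n a0 b0).Adj (.inl a) (.inr b) ↔ ¬(a = a0 ∧ b = b0) := by
  simp [delG, Sym2.eq_iff]

@[simp] lemma delG_adj_inr_inl {a : Fin m} {b : Fin n} :
    (delG m n a0 b0).Adj (.inr b) (.inl a) ↔ ¬(a = a0 ∧ b = b0) := by
  rw [adj_comm]; exact delG_adj_inl_inr

@[simp] lemma delG_adj_inl_inl {a a' : Fin m} :
    ¬ (delG m n a0 b0).Adj (.inl a) (.inl a') := by
  simp [delG]

@[simp] lemma delG_adj_inr_inr {b b' : Fin n} :
    ¬ (delG m n a0 b0).Adj (.inr b) (.inr b') := by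
  simp [delG]
@[simp] lemma subG_adj_inl_inr {a : Fin m} {b : Fin n} :
    (subG m n a0 b0).Adj (some (.inl a)) (some (.inr b)) ↔ ¬(a = a0 ∧ b = b0) := by
  constructor
  · simp only [subG, subdivide, fromRel_adj]
    rintro ⟨-, (⟨-, h⟩ | ⟨-, h⟩)⟩ ⟨rfl, rfl⟩ <;> simp [Sym2.eq_swap] at h
  · intro h; simp [subG, subdivide, fromRel_adj, Sym2.eq_iff]; tauto

@[simp] lemma subG_adj_inr_inl {a : Fin m} {b : Fin n} :
    (subG m n a0 b0).Adj (some (.inr b)) (some (.inl a)) ↔ ¬(a = a0 ∧ b = b0) := by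
  rw [adj_comm]; exact subG_adj_inl_inr

@[simp] lemma subG_adj_inl_inl {a a' : Fin m} :
    ¬ (subG m n a0 b0).Adj (some (.inl a)) (some (.inl a')) := by
  simp [subG, subdivide, fromRel_adj]

@[simp] lemma subG_adj_inr_inr {b b' : Fin n} :
    ¬ (subG m n a0 b0).Adj (some (.inr b)) (some (.inr b')) := by
  simp [subG, subdivide, fromRel_adj]

@[simp] lemma subG_adj_none_some {x : Fin m ⊕ Fin n} :
    (subG m n a0 b0).Adj none (some x) ↔ x = .inl a0 ∨ x = .inr b0 := by
  simp [subG, subdivide, fromRel_adj]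

@[simp] lemma subG_adj_some_none {x : Fin m ⊕ Fin n} :
    (subG m n a0 b0).Adj (some x) none ↔ x = .inl a0 ∨ x = .inr b0 := by
  rw [adj_comm]; exact subG_adj_none_some

@[simp] lemma subG_adj_none_none : ¬ (subG m n a0 b0).Adj none none := by simp
lemma ncard_image_univ {α β : Type*} [Fintype α] {f : α → β} (hf : Function.Injective f) :
    (f '' Set.univ).ncard = Fintype.card α := by
  rw [Set.ncard_image_of_injective _ hf, Set.ncard_univ, Nat.card_eq_fintype_card]

lemma ncard_image_compl {α β : Type*} [Fintype α] [DecidableEq α] {f : α → β}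
    (hf : Function.Injective f) (x : α) :
    (f '' {x}ᶜ).ncard = Fintype.card α - 1 := by
  rw [Set.ncard_image_of_injective _ hf, Set.compl_eq_univ_diff,
    Set.ncard_diff_singleton_of_mem (Set.mem_univ x), Set.ncard_univ, Nat.card_eq_fintype_card]

lemma sdeg_delG_inl {a : Fin m} :
    sdeg (delG m n a0 b0) (.inl a) = if a = a0 then n - 1 else n := by
  have h : (delG m n a0 b0).neighborSet (.inl a)
      = Sum.inr '' {b : Fin n | ¬(a = a0 ∧ b = b0)} := by
    ext y; rcases y with a' | b <;> simp [mem_neighborSet]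
  rw [sdeg, h]
  split_ifs with ha
  · have h2 : {b : Fin n | ¬(a = a0 ∧ b = b0)} = {b0}ᶜ := by ext b; simp [ha]
    rw [h2, ncard_image_compl Sum.inr_injective, Fintype.card_fin]
  · have h2 : {b : Fin n | ¬(a = a0 ∧ b = b0)} = Set.univ := by ext b; simp [ha]
    rw [h2, ncard_image_univ Sum.inr_injective, Fintype.card_fin]

lemma sdeg_delG_inr {b : Fin n} :
    sdeg (delG m n a0 b0) (.inr b) = if b = b0 then m - 1 else m := by
  have h : (delG m n a0 b0).neighborSet (.inr b)
      = Sum.inl '' {a : Fin m | ¬(a = a0 ∧ b = b0)} := by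
    ext y; rcases y with a | b' <;> simp [mem_neighborSet]
  rw [sdeg, h]
  split_ifs with hb
  · have h2 : {a : Fin m | ¬(a = a0 ∧ b = b0)} = {a0}ᶜ := by ext a; simp [hb]
    rw [h2, ncard_image_compl Sum.inl_injective, Fintype.card_fin]
  · have h2 : {a : Fin m | ¬(a = a0 ∧ b = b0)} = Set.univ := by ext a; simp [hb]
    rw [h2, ncard_image_univ Sum.inl_injective, Fintype.card_fin]

lemma sdeg_subG_none :
    sdeg (subG m n a0 b0) none = 2 := by
  have h : (subG m n a0 b0).neighborSet none
      = {some (.inl a0), some (.inr b0)} := by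
    ext y; rcases y with _ | x <;> simp [mem_neighborSet]
  rw [sdeg, h, Set.ncard_pair (by simp)]

lemma sdeg_subG_inl (hn : 1 ≤ n) {a : Fin m} :
    sdeg (subG m n a0 b0) (some (.inl a)) = n := by
  have hinj : Function.Injective (fun b : Fin n => (some (Sum.inr b) : Option (Fin m ⊕ Fin n))) :=
    fun x y h => by simpa using h
  by_cases ha : a = a0
  · have h : (subG m n a0 b0).neighborSet (some (.inl a))
        = insert none ((fun b : Fin n => some (Sum.inr b)) '' {b0}ᶜ) := by
      ext y; rcases y with _ | (a' | b) <;> simp [mem_neighborSet, ha]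
    rw [sdeg, h, Set.ncard_insert_of_notMem (by simp), ncard_image_compl hinj,
      Fintype.card_fin]
    omega
  · have h : (subG m n a0 b0).neighborSet (some (.inl a))
        = (fun b : Fin n => some (Sum.inr b)) '' Set.univ := by
      ext y; rcases y with _ | (a' | b) <;> simp [mem_neighborSet, ha]
    rw [sdeg, h, ncard_image_univ hinj, Fintype.card_fin]

lemma sdeg_subG_inr (hm : 1 ≤ m) {b : Fin n} :
    sdeg (subG m n a0 b0) (some (.inr b)) = m := by
  have hinj : Function.Injective (fun a : Fin m => (some (Sum.inl a) : Option (Fin m ⊕ Fin n))) :=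
    fun x y h => by simpa using h
  by_cases hb : b = b0
  · have h : (subG m n a0 b0).neighborSet (some (.inr b))
        = insert none ((fun a : Fin m => some (Sum.inl a)) '' {a0}ᶜ) := by
      ext y; rcases y with _ | (a | b') <;> simp [mem_neighborSet, hb]
    rw [sdeg, h, Set.ncard_insert_of_notMem (by simp), ncard_image_compl hinj,
      Fintype.card_fin]
    omega
  · have h : (subG m n a0 b0).neighborSet (some (.inr b))
        = (fun a : Fin m => some (Sum.inl a)) '' Set.univ := by
      ext y; rcases y with _ | (a | b') <;> simp [mem_neighborSet, hb]
    rw [sdeg, h, ncard_image_univ hinj, Fintype.card_fin]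
lemma delG_lb2 {D : Set (Fin m ⊕ Fin n)}
    (hD : IsStrongDominatingSet (delG m n a0 b0) D) : 2 ≤ D.ncard := by
  by_contra h
  have hone : ∀ {x y : Fin m ⊕ Fin n}, x ∈ D → y ∈ D → x = y :=
    (Set.ncard_le_one_iff (Set.toFinite D)).mp (by omega)
  by_cases hu : (Sum.inl a0 : Fin m ⊕ Fin n) ∈ D
  · by_cases hv : (Sum.inr b0 : Fin m ⊕ Fin n) ∈ D
    · exact absurd (hone hu hv) (by simp)
    · obtain ⟨y, hyD, hyAdj, -⟩ := hD _ hv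
      rcases y with a | b
      · have ha : ¬(a = a0 ∧ b0 = b0) := delG_adj_inr_inl.mp hyAdj
        exact ha ⟨by simpa using (hone hu hyD).symm, rfl⟩
      · exact delG_adj_inr_inr hyAdj
  · obtain ⟨y, hyD, hyAdj, -⟩ := hD _ hu
    rcases y with a | b
    · exact delG_adj_inl_inl hyAdj
    · have hb : ¬(a0 = a0 ∧ b = b0) := delG_adj_inl_inr.mp hyAdj
      by_cases hv : (Sum.inr b0 : Fin m ⊕ Fin n) ∈ D
      · exact hb ⟨rfl, by simpa using (hone hyD hv)⟩
      · obtain ⟨z, hzD, hzAdj, -⟩ := hD _ hv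
        rcases z with a' | b'
        · exact absurd (hone hyD hzD) (by simp)
        · exact delG_adj_inr_inr hzAdj

lemma subG_lb2 (hm : 1 ≤ m) (hn : 1 ≤ n) (hmn : 3 ≤ m + n)
    {D : Set (Option (Fin m ⊕ Fin n))}
    (hD : IsStrongDominatingSet (subG m n a0 b0) D) : 2 ≤ D.ncard := by
  by_contra h
  have hone : ∀ {x y : Option (Fin m ⊕ Fin n)}, x ∈ D → y ∈ D → x = y :=
    (Set.ncard_le_one_iff (Set.toFinite D)).mp (by omega)
  by_cases hw : (none : Option (Fin m ⊕ Fin n)) ∈ D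
  · have h2 : 2 ≤ m ∨ 2 ≤ n := by omega
    rcases h2 with h2 | h2
    · have : Nontrivial (Fin m) := Fin.nontrivial_iff_two_le.mpr h2
      obtain ⟨a1, ha1⟩ := exists_ne a0
      by_cases hx : (some (Sum.inl a1) : Option (Fin m ⊕ Fin n)) ∈ D
      · exact absurd (hone hx hw) (by simp)
      · obtain ⟨y, hyD, hyAdj, -⟩ := hD _ hx
        rcases y with _ | (a | b)
        · rcases subG_adj_some_none.mp hyAdj with h' | h' <;> simp_all
        · exact subG_adj_inl_inl hyAdj
        · exact absurd (hone hyD hw) (by simp)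
    · have : Nontrivial (Fin n) := Fin.nontrivial_iff_two_le.mpr h2
      obtain ⟨b1, hb1⟩ := exists_ne b0
      by_cases hx : (some (Sum.inr b1) : Option (Fin m ⊕ Fin n)) ∈ D
      · exact absurd (hone hx hw) (by simp)
      · obtain ⟨y, hyD, hyAdj, -⟩ := hD _ hx
        rcases y with _ | (a | b)
        · rcases subG_adj_some_none.mp hyAdj with h' | h' <;> simp_all
        · exact absurd (hone hyD hw) (by simp)
        · exact subG_adj_inr_inr hyAdj
  · obtain ⟨y, hyD, hyAdj, -⟩ := hD _ hw
    rcases y with _ | x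
    · exact subG_adj_none_none hyAdj
    rcases subG_adj_none_some.mp hyAdj with rfl | rfl
    · -- y = some (inl a0)
      by_cases hv : (some (Sum.inr b0) : Option (Fin m ⊕ Fin n)) ∈ D
      · exact absurd (hone hyD hv) (by simp)
      · obtain ⟨z, hzD, hzAdj, -⟩ := hD _ hv
        rcases z with _ | (a | b)
        · exact hw hzD
        · have := subG_adj_inr_inl.mp hzAdj
          exact this ⟨by simpa using (hone hyD hzD).symm, rfl⟩
        · exact subG_adj_inr_inr hzAdj
    · -- y = some (inr b0)
      by_cases hu : (some (Sum.inl a0) : Option (Fin m ⊕ Fin n)) ∈ D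
      · exact absurd (hone hyD hu) (by simp)
      · obtain ⟨z, hzD, hzAdj, -⟩ := hD _ hu
        rcases z with _ | (a | b)
        · exact hw hzD
        · exact subG_adj_inl_inl hzAdj
        · have := subG_adj_inl_inr.mp hzAdj
          exact this ⟨rfl, by simpa using (hone hyD hzD).symm⟩
-- Case m = n (so m, n ≥ 2): both equal 2
lemma sdn_delG_eq (hmn : m = n) (hm : 2 ≤ m) :
    strongDominationNumber (delG m n a0 b0) = 2 := by
  have : Nontrivial (Fin m) := Fin.nontrivial_iff_two_le.mpr hm
  have : Nontrivial (Fin n) := Fin.nontrivial_iff_two_le.mpr (hmn ▸ hm)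
  obtain ⟨a1, ha1⟩ := exists_ne a0
  obtain ⟨b1, hb1⟩ := exists_ne b0
  apply sdn_eq _ 2 {Sum.inl a1, Sum.inr b1}
  · rintro (a | b) hx
    · refine ⟨Sum.inr b1, by simp, delG_adj_inl_inr.mpr (by tauto), ?_⟩
      rw [sdeg_delG_inl, sdeg_delG_inr]
      split_ifs <;> omega
    · refine ⟨Sum.inl a1, by simp, delG_adj_inr_inl.mpr (by tauto), ?_⟩
      rw [sdeg_delG_inl, sdeg_delG_inr]
      split_ifs <;> omega
  · exact Set.ncard_pair (by simp)
  · intro D hD; exact delG_lb2 hD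

lemma sdn_subG_eq (hmn : m = n) (hm : 2 ≤ m) :
    strongDominationNumber (subG m n a0 b0) = 2 := by
  have hn : 2 ≤ n := hmn ▸ hm
  apply sdn_eq _ 2 {some (Sum.inl a0), some (Sum.inr b0)}
  · rintro (_ | (a | b)) hx
    · refine ⟨some (Sum.inl a0), by simp, subG_adj_none_some.mpr (Or.inl rfl), ?_⟩
      rw [sdeg_subG_none, sdeg_subG_inl (by omega)]; omega
    · have ha : a ≠ a0 := fun h => hx (by simp [h])
      refine ⟨some (Sum.inr b0), by simp, subG_adj_inl_inr.mpr (by tauto), ?_⟩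
      rw [sdeg_subG_inl (by omega), sdeg_subG_inr (by omega)]; omega
    · have hb : b ≠ b0 := fun h => hx (by simp [h])
      refine ⟨some (Sum.inl a0), by simp, subG_adj_inr_inl.mpr (by tauto), ?_⟩
      rw [sdeg_subG_inl (by omega), sdeg_subG_inr (by omega)]; omega
  · exact Set.ncard_pair (by simp)
  · intro D hD; exact subG_lb2 (by omega) (by omega) (by omega) hD

-- Case m = 1 < n : both equal 2
lemma sdn_delG_m1 (hm : m = 1) (hn : 2 ≤ n) :
    strongDominationNumber (delG m n a0 b0) = 2 := by
  apply sdn_eq _ 2 {Sum.inl a0, Sum.inr b0}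
  · rintro (a | b) hx
    · exfalso; apply hx
      have : a = a0 := by subst hm; exact Subsingleton.elim a a0
      simp [this]
    · have hb : b ≠ b0 := fun h => hx (by simp [h])
      refine ⟨Sum.inl a0, by simp, delG_adj_inr_inl.mpr (by tauto), ?_⟩
      rw [sdeg_delG_inl, sdeg_delG_inr]
      split_ifs <;> omega
  · exact Set.ncard_pair (by simp)
  · intro D hD; exact delG_lb2 hD

lemma sdn_subG_m1 (hm : m = 1) (hn : 2 ≤ n) :
    strongDominationNumber (subG m n a0 b0) = 2 := by
  apply sdn_eq _ 2 {some (Sum.inl a0), some (Sum.inr b0)}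
  · rintro (_ | (a | b)) hx
    · refine ⟨some (Sum.inl a0), by simp, subG_adj_none_some.mpr (Or.inl rfl), ?_⟩
      rw [sdeg_subG_none, sdeg_subG_inl (by omega)]; omega
    · exfalso; apply hx
      have : a = a0 := by subst hm; exact Subsingleton.elim a a0
      simp [this]
    · have hb : b ≠ b0 := fun h => hx (by simp [h])
      refine ⟨some (Sum.inl a0), by simp, subG_adj_inr_inl.mpr (by tauto), ?_⟩
      rw [sdeg_subG_inl (by omega), sdeg_subG_inr (by omega)]; omega
  · exact Set.ncard_pair (by simp)
  · intro D hD; exact subG_lb2 (by omega) (by omega) (by omega) hD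

-- Case n = 1 < m : both equal 2
lemma sdn_delG_n1 (hn : n = 1) (hm : 2 ≤ m) :
    strongDominationNumber (delG m n a0 b0) = 2 := by
  apply sdn_eq _ 2 {Sum.inl a0, Sum.inr b0}
  · rintro (a | b) hx
    · have ha : a ≠ a0 := fun h => hx (by simp [h])
      refine ⟨Sum.inr b0, by simp, delG_adj_inl_inr.mpr (by tauto), ?_⟩
      rw [sdeg_delG_inl, sdeg_delG_inr]
      split_ifs <;> omega
    · exfalso; apply hx
      have : b = b0 := by subst hn; exact Subsingleton.elim b b0
      simp [this]
  · exact Set.ncard_pair (by simp)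
  · intro D hD; exact delG_lb2 hD

lemma sdn_subG_n1 (hn : n = 1) (hm : 2 ≤ m) :
    strongDominationNumber (subG m n a0 b0) = 2 := by
  apply sdn_eq _ 2 {some (Sum.inl a0), some (Sum.inr b0)}
  · rintro (_ | (a | b)) hx
    · refine ⟨some (Sum.inr b0), by simp, subG_adj_none_some.mpr (Or.inr rfl), ?_⟩
      rw [sdeg_subG_none, sdeg_subG_inr (by omega)]; omega
    · have ha : a ≠ a0 := fun h => hx (by simp [h])
      refine ⟨some (Sum.inr b0), by simp, subG_adj_inl_inr.mpr (by tauto), ?_⟩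
      rw [sdeg_subG_inl (by omega), sdeg_subG_inr (by omega)]; omega
    · exfalso; apply hx
      have : b = b0 := by subst hn; exact Subsingleton.elim b b0
      simp [this]
  · exact Set.ncard_pair (by simp)
  · intro D hD; exact subG_lb2 (by omega) (by omega) (by omega) hD
-- Case 2 ≤ m < n : both equal m
lemma sdn_delG_mlt (hm : 2 ≤ m) (h : m < n) :
    strongDominationNumber (delG m n a0 b0) = m := by
  have : Nontrivial (Fin m) := Fin.nontrivial_iff_two_le.mpr hm
  obtain ⟨a1, ha1⟩ := exists_ne a0
  apply sdn_eq _ m (Sum.inl '' Set.univ)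
  · rintro (a | b) hx
    · exact absurd (Set.mem_image_of_mem _ (Set.mem_univ a)) hx
    · refine ⟨Sum.inl a1, Set.mem_image_of_mem _ (Set.mem_univ a1),
        delG_adj_inr_inl.mpr (by tauto), ?_⟩
      rw [sdeg_delG_inl, sdeg_delG_inr]
      split_ifs <;> omega
  · rw [ncard_image_univ Sum.inl_injective, Fintype.card_fin]
  · intro D hD
    have hsub : Sum.inl '' ({a0}ᶜ : Set (Fin m)) ⊆ D := by
      rintro _ ⟨a, ha, rfl⟩
      by_contra hx
      obtain ⟨y, hyD, hyAdj, hdeg⟩ := hD _ hx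
      rcases y with a' | b
      · exact delG_adj_inl_inl hyAdj
      · rw [sdeg_delG_inl, sdeg_delG_inr] at hdeg
        have ha' : a ≠ a0 := ha
        split_ifs at hdeg <;> omega
    have hextra : ∃ z ∈ D, z ∉ Sum.inl '' ({a0}ᶜ : Set (Fin m)) := by
      by_cases hu : (Sum.inl a0 : Fin m ⊕ Fin n) ∈ D
      · exact ⟨_, hu, by simp⟩
      · obtain ⟨y, hyD, hyAdj, -⟩ := hD _ hu
        rcases y with a | b
        · exact absurd hyAdj delG_adj_inl_inl
        · exact ⟨_, hyD, by simp⟩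
    obtain ⟨z, hzD, hz⟩ := hextra
    calc m = (insert z (Sum.inl '' ({a0}ᶜ : Set (Fin m)))).ncard := by
            rw [Set.ncard_insert_of_notMem hz, ncard_image_compl Sum.inl_injective,
              Fintype.card_fin]
            omega
      _ ≤ D.ncard := Set.ncard_le_ncard (Set.insert_subset hzD hsub) (Set.toFinite D)

lemma sdn_subG_mlt (hm : 2 ≤ m) (h : m < n) :
    strongDominationNumber (subG m n a0 b0) = m := by
  have : Nontrivial (Fin m) := Fin.nontrivial_iff_two_le.mpr hm
  obtain ⟨a1, ha1⟩ := exists_ne a0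
  apply sdn_eq _ m ((fun a : Fin m => some (Sum.inl a)) '' Set.univ)
  · rintro (_ | (a | b)) hx
    · refine ⟨some (Sum.inl a0), Set.mem_image_of_mem _ (Set.mem_univ a0),
        subG_adj_none_some.mpr (Or.inl rfl), ?_⟩
      rw [sdeg_subG_none, sdeg_subG_inl (by omega)]; omega
    · exact absurd (Set.mem_image_of_mem _ (Set.mem_univ a)) hx
    · refine ⟨some (Sum.inl a1), Set.mem_image_of_mem _ (Set.mem_univ a1),
        subG_adj_inr_inl.mpr (by tauto), ?_⟩
      rw [sdeg_subG_inl (by omega), sdeg_subG_inr (by omega)]; omega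
  · rw [ncard_image_univ (fun x y hxy => by simpa using hxy), Fintype.card_fin]
  · intro D hD
    have hsub : (fun a : Fin m => some (Sum.inl a)) '' Set.univ ⊆ D := by
      rintro _ ⟨a, -, rfl⟩
      by_contra hx
      obtain ⟨y, hyD, hyAdj, hdeg⟩ := hD _ hx
      rcases y with _ | (a' | b)
      · rw [sdeg_subG_inl (by omega), sdeg_subG_none] at hdeg; omega
      · exact subG_adj_inl_inl hyAdj
      · rw [sdeg_subG_inl (by omega), sdeg_subG_inr (by omega)] at hdeg; omega
    calc m = ((fun a : Fin m => some (Sum.inl a)) '' Set.univ).ncard := by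
            rw [ncard_image_univ (fun x y hxy => by simpa using hxy), Fintype.card_fin]
      _ ≤ D.ncard := Set.ncard_le_ncard hsub (Set.toFinite D)

-- Case 2 ≤ n < m : both equal n
lemma sdn_delG_nlt (hn : 2 ≤ n) (h : n < m) :
    strongDominationNumber (delG m n a0 b0) = n := by
  have : Nontrivial (Fin n) := Fin.nontrivial_iff_two_le.mpr hn
  obtain ⟨b1, hb1⟩ := exists_ne b0
  apply sdn_eq _ n (Sum.inr '' Set.univ)
  · rintro (a | b) hx
    · refine ⟨Sum.inr b1, Set.mem_image_of_mem _ (Set.mem_univ b1),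
        delG_adj_inl_inr.mpr (by tauto), ?_⟩
      rw [sdeg_delG_inl, sdeg_delG_inr]
      split_ifs <;> omega
    · exact absurd (Set.mem_image_of_mem _ (Set.mem_univ b)) hx
  · rw [ncard_image_univ Sum.inr_injective, Fintype.card_fin]
  · intro D hD
    have hsub : Sum.inr '' ({b0}ᶜ : Set (Fin n)) ⊆ D := by
      rintro _ ⟨b, hb, rfl⟩
      by_contra hx
      obtain ⟨y, hyD, hyAdj, hdeg⟩ := hD _ hx
      rcases y with a | b'
      · rw [sdeg_delG_inl, sdeg_delG_inr] at hdeg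
        have hb' : b ≠ b0 := hb
        split_ifs at hdeg <;> omega
      · exact delG_adj_inr_inr hyAdj
    have hextra : ∃ z ∈ D, z ∉ Sum.inr '' ({b0}ᶜ : Set (Fin n)) := by
      by_cases hv : (Sum.inr b0 : Fin m ⊕ Fin n) ∈ D
      · exact ⟨_, hv, by simp⟩
      · obtain ⟨y, hyD, hyAdj, -⟩ := hD _ hv
        rcases y with a | b
        · exact ⟨_, hyD, by simp⟩
        · exact absurd hyAdj delG_adj_inr_inr
    obtain ⟨z, hzD, hz⟩ := hextra
    calc n = (insert z (Sum.inr '' ({b0}ᶜ : Set (Fin n)))).ncard := by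
            rw [Set.ncard_insert_of_notMem hz, ncard_image_compl Sum.inr_injective,
              Fintype.card_fin]
            omega
      _ ≤ D.ncard := Set.ncard_le_ncard (Set.insert_subset hzD hsub) (Set.toFinite D)

lemma sdn_subG_nlt (hn : 2 ≤ n) (h : n < m) :
    strongDominationNumber (subG m n a0 b0) = n := by
  have : Nontrivial (Fin n) := Fin.nontrivial_iff_two_le.mpr hn
  obtain ⟨b1, hb1⟩ := exists_ne b0
  apply sdn_eq _ n ((fun b : Fin n => some (Sum.inr b)) '' Set.univ)
  · rintro (_ | (a | b)) hx
    · refine ⟨some (Sum.inr b0), Set.mem_image_of_mem _ (Set.mem_univ b0),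
        subG_adj_none_some.mpr (Or.inr rfl), ?_⟩
      rw [sdeg_subG_none, sdeg_subG_inr (by omega)]; omega
    · refine ⟨some (Sum.inr b1), Set.mem_image_of_mem _ (Set.mem_univ b1),
        subG_adj_inl_inr.mpr (by tauto), ?_⟩
      rw [sdeg_subG_inl (by omega), sdeg_subG_inr (by omega)]; omega
    · exact absurd (Set.mem_image_of_mem _ (Set.mem_univ b)) hx
  · rw [ncard_image_univ (fun x y hxy => by simpa using hxy), Fintype.card_fin]
  · intro D hD
    have hsub : (fun b : Fin n => some (Sum.inr b)) '' Set.univ ⊆ D := by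
      rintro _ ⟨b, -, rfl⟩
      by_contra hx
      obtain ⟨y, hyD, hyAdj, hdeg⟩ := hD _ hx
      rcases y with _ | (a | b')
      · rw [sdeg_subG_inr (by omega), sdeg_subG_none] at hdeg; omega
      · rw [sdeg_subG_inr (by omega), sdeg_subG_inl (by omega)] at hdeg; omega
      · exact subG_adj_inr_inr hyAdj
    calc n = ((fun b : Fin n => some (Sum.inr b)) '' Set.univ).ncard := by
            rw [ncard_image_univ (fun x y hxy => by simpa using hxy), Fintype.card_fin]
      _ ≤ D.ncard := Set.ncard_le_ncard hsub (Set.toFinite D)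
lemma main_case (m n : ℕ) (hm : 1 ≤ m) (hn : 1 ≤ n) (hmn : 3 ≤ m + n)
    (a0 : Fin m) (b0 : Fin n) :
    strongDominationNumber (delG m n a0 b0) = strongDominationNumber (subG m n a0 b0) := by
  rcases lt_trichotomy m n with h | h | h
  · rcases eq_or_lt_of_le hm with h1 | h1
    · rw [sdn_delG_m1 h1.symm (by omega), sdn_subG_m1 h1.symm (by omega)]
    · rw [sdn_delG_mlt h1 h, sdn_subG_mlt h1 h]
  · rw [sdn_delG_eq h (by omega), sdn_subG_eq h (by omega)]
  · rcases eq_or_lt_of_le hn with h1 | h1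
    · rw [sdn_delG_n1 h1.symm (by omega), sdn_subG_n1 h1.symm (by omega)]
    · rw [sdn_delG_nlt h1 h, sdn_subG_nlt h1 h]

/-- For `m, n ≥ 1` with `m + n ≥ 3` and any edge `e` of `K_{m,n}`,
`γst(K_{m,n} - e) = γst((K_{m,n})_e)`. -/
theorem strongDominationNumber_completeBipartite_deleteEdge_eq_subdivide
    (m n : ℕ) (hm : 1 ≤ m) (hn : 1 ≤ n) (hmn : 3 ≤ m + n)
    (u v : Fin m ⊕ Fin n) (huv : (completeBipartiteGraph (Fin m) (Fin n)).Adj u v) :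
    strongDominationNumber
        ((completeBipartiteGraph (Fin m) (Fin n)).deleteEdges {s(u, v)}) =
      strongDominationNumber (subdivide (completeBipartiteGraph (Fin m) (Fin n)) u v) := by
  rcases u with a | b <;> rcases v with a' | b'
  · simp at huv
  · exact main_case m n hm hn hmn a b'
  · rw [Sym2.eq_swap, subdivide_comm]
    exact main_case m n hm hn hmn a' b
  · simp at huv
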